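/- Let R be a commutative ring, g ≥ 1, and let L be the free Lie algebra over R on a free R-module V with basis e₁, …, e_g, f₁, …, f_g. Set ω := Σ_{i=1}^g ⁅eᵢ, fᵢ⁆ ∈ L. Then the image of the R-linear evaluation map Der(L) → L, D ↦ D(ω), where Der(L) is the module of derivations of L (R-linear maps D : L → L with D⁅x,y⁆ = ⁅D x, y⁆ + ⁅x, D y⁆), is exactly the derived ideal ⁅L, L⁆. In particular, evaluation at ω is a surjection of Der(L) onto ⁅L, L⁆ whose kernel is the module Der_ω(L) of derivations vanishing on ω. (The surjectivity underlying the exact row identifying Der_ω in the paper's computation of π_*Maps_∂(W_{g,1}, W_{g,1}), where ω is the attaching class of W_{g,1}.) -/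
import Mathlib

noncomputable section

namespace Stmt7Aux

variable {R : Type*} [CommRing R] {L : Type*} [LieRing L] [LieAlgebra R L]

/-- Semidirect product `L ⋉ L` with `L` acting on itself by the adjoint action. -/
@[ext] structure SD (L : Type*) where
  a : L
  b : L

namespace SD

instance : AddCommGroup (SD L) where
  add x y := ⟨x.a + y.a, x.b + y.b⟩
  zero := ⟨0, 0⟩
  neg x := ⟨-x.a, -x.b⟩
  add_assoc x y z := by ext <;> apply add_assoc
  zero_add x := by ext <;> apply zero_add
  add_zero x := by ext <;> apply add_zero
  add_comm x y := by ext <;> apply add_comm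
  neg_add_cancel x := by ext <;> apply neg_add_cancel
  nsmul n x := ⟨n • x.a, n • x.b⟩
  nsmul_zero x := by ext <;> apply zero_nsmul
  nsmul_succ n x := by ext <;> apply succ_nsmul
  zsmul n x := ⟨n • x.a, n • x.b⟩
  zsmul_zero' x := by ext <;> apply zero_zsmul
  zsmul_succ' n x := by ext <;> exact SubNegMonoid.zsmul_succ' n _
  zsmul_neg' n x := by ext <;> exact SubNegMonoid.zsmul_neg' n _

@[simp] lemma add_a (x y : SD L) : (x + y).a = x.a + y.a := rfl
@[simp] lemma add_b (x y : SD L) : (x + y).b = x.b + y.b := rfl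
@[simp] lemma zero_a : (0 : SD L).a = 0 := rfl
@[simp] lemma zero_b : (0 : SD L).b = 0 := rfl

instance : Module R (SD L) where
  smul r x := ⟨r • x.a, r • x.b⟩
  one_smul x := by ext <;> apply one_smul
  mul_smul r s x := by ext <;> apply mul_smul
  smul_zero r := by ext <;> apply smul_zero
  smul_add r x y := by ext <;> apply smul_add
  add_smul r s x := by ext <;> apply add_smul
  zero_smul x := by ext <;> apply zero_smul

@[simp] lemma smul_a (r : R) (x : SD L) : (r • x).a = r • x.a := rfl
@[simp] lemma smul_b (r : R) (x : SD L) : (r • x).b = r • x.b := rfl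

instance : LieRing (SD L) where
  bracket x y := ⟨⁅x.a, y.a⁆, ⁅x.a, y.b⁆ + ⁅x.b, y.a⁆⟩
  add_lie x y z := by ext <;> simp <;> abel
  lie_add x y z := by ext <;> simp <;> abel
  lie_self x := by
    ext
    · exact lie_self _
    · show ⁅x.a, x.b⁆ + ⁅x.b, x.a⁆ = 0
      rw [← lie_skew]; abel
  leibniz_lie x y z := by
    ext
    · exact leibniz_lie _ _ _
    · show ⁅x.a, ⁅y.a, z.b⁆ + ⁅y.b, z.a⁆⁆ + ⁅x.b, ⁅y.a, z.a⁆⁆ =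
        (⁅⁅x.a, y.a⁆, z.b⁆ + ⁅⁅x.a, y.b⁆ + ⁅x.b, y.a⁆, z.a⁆) +
          (⁅y.a, ⁅x.a, z.b⁆ + ⁅x.b, z.a⁆⁆ + ⁅y.b, ⁅x.a, z.a⁆⁆)
      simp only [lie_add, add_lie, lie_lie]
      abel

@[simp] lemma lie_a (x y : SD L) : ⁅x, y⁆.a = ⁅x.a, y.a⁆ := rfl
@[simp] lemma lie_b (x y : SD L) : ⁅x, y⁆.b = ⁅x.a, y.b⁆ + ⁅x.b, y.a⁆ := rfl

instance : LieAlgebra R (SD L) where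
  lie_smul r x y := by ext <;> simp

variable (R L)

/-- First projection as a Lie algebra hom. -/
def p1 : SD L →ₗ⁅R⁆ L where
  toFun := SD.a
  map_add' _ _ := rfl
  map_smul' _ _ := rfl
  map_lie' := rfl

/-- Second projection as a linear map. -/
def p2 : SD L →ₗ[R] L where
  toFun := SD.b
  map_add' _ _ := rfl
  map_smul' _ _ := rfl

end SD

open FreeLieAlgebra

variable (R) {X : Type*}

/-- The lift to the semidirect product used to build a derivation with values `φ` on
generators. -/
def F (φ : X → FreeLieAlgebra R X) :
    FreeLieAlgebra R X →ₗ⁅R⁆ SD (FreeLieAlgebra R X) :=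
  FreeLieAlgebra.lift R fun x => ⟨of R x, φ x⟩

lemma F_a (φ : X → FreeLieAlgebra R X) (z : FreeLieAlgebra R X) : (F R φ z).a = z := by
  have : (SD.p1 R (FreeLieAlgebra R X)).comp (F R φ) = LieHom.id := by
    apply FreeLieAlgebra.hom_ext
    intro x
    simp [F, SD.p1, lift_of_apply]
  exact DFunLike.congr_fun this z

/-- The derivation with values `φ` on generators. -/
def derOf (φ : X → FreeLieAlgebra R X) : FreeLieAlgebra R X →ₗ[R] FreeLieAlgebra R X :=
  (SD.p2 R (FreeLieAlgebra R X)).comp (F R φ).toLinearMap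

lemma derOf_leibniz (φ : X → FreeLieAlgebra R X) (x y : FreeLieAlgebra R X) :
    derOf R φ ⁅x, y⁆ = ⁅derOf R φ x, y⁆ + ⁅x, derOf R φ y⁆ := by
  have h := (F R φ).map_lie x y
  have := congrArg SD.b h
  simp only [SD.lie_b, F_a] at this
  simpa [derOf, SD.p2, add_comm] using this

lemma derOf_of (φ : X → FreeLieAlgebra R X) (x : X) : derOf R φ (of R x) = φ x := by
  simp [derOf, F, SD.p2, lift_of_apply]

end Stmt7Aux

open Stmt7Aux FreeLieAlgebra in
/-- let `L` be the free Lie algebra over `R` on generators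
`e₁, …, e_g, f₁, …, f_g` and `ω := Σᵢ ⁅eᵢ, fᵢ⁆`.  The image of the evaluation map
`Der(L) → L`, `D ↦ D(ω)`, on derivations of `L` is exactly the derived ideal `⁅L, L⁆`,
i.e. the `R`-submodule generated by all brackets. -/
theorem stmt7 (R : Type*) [CommRing R] (g : ℕ) (hg : 1 ≤ g) :
    {z : FreeLieAlgebra R (Fin g ⊕ Fin g) |
        ∃ D : FreeLieAlgebra R (Fin g ⊕ Fin g) →ₗ[R] FreeLieAlgebra R (Fin g ⊕ Fin g),
          (∀ x y : FreeLieAlgebra R (Fin g ⊕ Fin g), D ⁅x, y⁆ = ⁅D x, y⁆ + ⁅x, D y⁆) ∧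
          D (∑ i : Fin g,
              ⁅FreeLieAlgebra.of R (Sum.inl i : Fin g ⊕ Fin g), FreeLieAlgebra.of R (Sum.inr i : Fin g ⊕ Fin g)⁆) = z} =
      ↑(Submodule.span R
          {z : FreeLieAlgebra R (Fin g ⊕ Fin g) |
            ∃ x y : FreeLieAlgebra R (Fin g ⊕ Fin g), z = ⁅x, y⁆}) := by
  set X := Fin g ⊕ Fin g
  set L := FreeLieAlgebra R X
  -- the submodule spanned by brackets with a generator on the left
  set M : Submodule R L := Submodule.span R {z : L | ∃ (b : X) (w : L), z = ⁅of R b, w⁆} with hM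
  -- every bracket lies in M
  have hKmem : ∀ x y : L, ⁅x, y⁆ ∈ M := by
    let K : LieSubalgebra R L :=
      { carrier := {x : L | ∀ y : L, ⁅x, y⁆ ∈ M}
        add_mem' := fun hx hy y => by rw [add_lie]; exact M.add_mem (hx y) (hy y)
        zero_mem' := fun y => by rw [zero_lie]; exact M.zero_mem
        smul_mem' := fun r x hx y => by rw [smul_lie]; exact M.smul_mem r (hx y)
        lie_mem' := fun {x y} hx hy z => by
          rw [lie_lie]; exact M.sub_mem (hx _) (hy _) }
    have hKtop : ∀ x : L, x ∈ K := by
      intro x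
      have hgen : ∀ b : X, (of R b : L) ∈ K := fun b y =>
        Submodule.subset_span ⟨b, y, rfl⟩
      let G : L →ₗ⁅R⁆ K := FreeLieAlgebra.lift R fun b => ⟨of R b, hgen b⟩
      have : K.incl.comp G = LieHom.id := by
        apply FreeLieAlgebra.hom_ext
        intro b
        simp [G, lift_of_apply]
      have := DFunLike.congr_fun this x
      simp only [LieHom.coe_comp, Function.comp_apply, LieHom.coe_id, id_eq] at this
      rw [← this]
      exact (G x).2
    exact fun x y => hKtop x y
  ext z
  constructor
  · rintro ⟨D, hD, rfl⟩
    rw [map_sum]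
    refine Submodule.sum_mem _ fun i _ => ?_
    rw [hD]
    exact add_mem (Submodule.subset_span ⟨_, _, rfl⟩) (Submodule.subset_span ⟨_, _, rfl⟩)
  · intro hz
    -- reduce to M
    have hzM : z ∈ M := by
      refine Submodule.span_le.mpr ?_ hz
      rintro _ ⟨x, y, rfl⟩
      exact hKmem x y
    -- every element of M is a value D ω
    clear hz
    induction hzM using Submodule.span_induction with
    | mem w hw =>
      obtain ⟨b, v, rfl⟩ := hw
      rcases b with i | i
      · -- target ⁅e i, v⁆ : put v at f i
        refine ⟨derOf R (Sum.elim 0 fun j => if j = i then v else 0), derOf_leibniz R _, ?_⟩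
        rw [map_sum]
        rw [Finset.sum_eq_single i]
        · simp [derOf_leibniz, derOf_of]
        · intro j _ hj
          simp [derOf_leibniz, derOf_of, hj]
        · simp
      · -- target ⁅f i, v⁆ : put -v at e i
        refine ⟨derOf R (Sum.elim (fun j => if j = i then -v else 0) 0), derOf_leibniz R _, ?_⟩
        rw [map_sum]
        rw [Finset.sum_eq_single i]
        · rw [derOf_leibniz, derOf_of, derOf_of, Sum.elim_inl, Sum.elim_inr, if_pos rfl,
            Pi.zero_apply, lie_zero, add_zero, neg_lie]
          exact lie_skew _ _
        · intro j _ hj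
          simp [derOf_leibniz, derOf_of, hj]
        · simp
    | zero => exact ⟨0, by simp, by simp⟩
    | add x y hx hy ihx ihy =>
      obtain ⟨D1, h1, e1⟩ := ihx
      obtain ⟨D2, h2, e2⟩ := ihy
      exact ⟨D1 + D2, fun a b => by simp [h1, h2]; abel, by rw [LinearMap.add_apply, e1, e2]⟩
    | smul r x hx ihx =>
      obtain ⟨D, h, e⟩ := ihx
      exact ⟨r • D, fun a b => by simp [h, smul_add], by rw [LinearMap.smul_apply, e]⟩
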